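/- Let γ₁ denote the standard Gaussian measure on ℝ, let ν ≥ 0 and a = √(2ν), and write Q(a) = γ₁((a, ∞)) and p(a) = (2π)^{−1/2} e^{−a²/2}. Then ∫_ℝ ( g² + φ̄_ν(g) ) dγ₁(g) = 1/2 − ν − a·p(a) − Q(a) + 2ν·Q(a). -/

import Mathlib

open MeasureTheory ProbabilityTheory

/-- `sgn t = 1` if `t > 0` and `sgn t = −1` if `t ≤ 0`. -/
noncomputable def sgn (t : ℝ) : ℝ := if 0 < t then 1 else -1

/-- `φ̄_ν(u)`: the per-coordinate minimum of `z² − 2uz + ν·sgn(z)`. -/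
noncomputable def phibar (ν u : ℝ) : ℝ :=
  if u ≤ 0 then -u ^ 2 - ν else if u ≤ Real.sqrt (2 * ν) then -ν else -u ^ 2 + ν

section Aux

open Real

lemma gauss_setIntegral (s : Set ℝ) (hs : MeasurableSet s) (f : ℝ → ℝ) :
    ∫ x in s, f x ∂(gaussianReal 0 1)
      = ∫ x in s, gaussianPDFReal 0 1 x * f x := by
  rw [gaussianReal_of_var_ne_zero 0 one_ne_zero]
  have h : gaussianPDF 0 1 = fun x => ((gaussianPDFReal 0 1 x).toNNReal : ENNReal) := by
    funext x
    simp [gaussianPDF, ENNReal.ofReal]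
  rw [h, setIntegral_withDensity_eq_setIntegral_smul
    (measurable_gaussianPDFReal 0 1).real_toNNReal f hs]
  refine setIntegral_congr_fun hs fun x _ => ?_
  simp [NNReal.smul_def, Real.coe_toNNReal _ (gaussianPDFReal_nonneg 0 1 x)]

lemma gauss_meas (s : Set ℝ) (hs : MeasurableSet s) :
    ((gaussianReal 0 1) s).toReal = ∫ x in s, gaussianPDFReal 0 1 x := by
  have h := gauss_setIntegral s hs (fun _ => 1)
  simp at h
  exact h

lemma pdf_eq (x : ℝ) : gaussianPDFReal 0 1 x = (Real.sqrt (2*π))⁻¹ * Real.exp (-(x^2)/2) := by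
  simp [gaussianPDFReal]

lemma exp_Ioi : ∫ x in Set.Ioi (0:ℝ), Real.exp (-(x^2)/2) = Real.sqrt (2*π) / 2 := by
  have h := integral_gaussian_Ioi (1/2)
  have h2 : ∀ x:ℝ, -(1/2:ℝ) * x^2 = -(x^2)/2 := fun x => by ring
  simp_rw [h2] at h
  rw [h, show π / (1/2:ℝ) = 2*π by ring]

lemma gauss_half : ((gaussianReal 0 1) (Set.Ioi (0:ℝ))).toReal = 1/2 := by
  rw [gauss_meas _ measurableSet_Ioi]
  simp_rw [pdf_eq]
  rw [integral_const_mul, exp_Ioi]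
  have hπ : (0:ℝ) < Real.sqrt (2*π) := Real.sqrt_pos.mpr (by positivity)
  field_simp

lemma hasDerivAt_G (c x : ℝ) :
    HasDerivAt (fun x : ℝ => -x * (c * Real.exp (-(x^2)/2)))
      (c * Real.exp (-(x^2)/2) * x^2 - c * Real.exp (-(x^2)/2)) x := by
  have h1 : HasDerivAt (fun x : ℝ => -x) (-1) x := (hasDerivAt_id x).neg
  have hin : HasDerivAt (fun x : ℝ => -(x^2)/2) (-x) x := by
    have : HasDerivAt (fun x : ℝ => -(x^2)/2) (-((2:ℕ) * x^(2-1) : ℝ)/2) x :=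
      ((hasDerivAt_pow 2 x).neg).div_const 2
    convert this using 1
    push_cast; ring
  have h2 : HasDerivAt (fun x : ℝ => c * Real.exp (-(x^2)/2))
      (c * (Real.exp (-(x^2)/2) * (-x))) x := (hin.exp).const_mul c
  have : HasDerivAt (fun x : ℝ => -x * (c * Real.exp (-(x^2)/2)))
      (-1 * (c * Real.exp (-(x^2)/2)) + -x * (c * (Real.exp (-(x^2)/2) * -x))) x := h1.mul h2
  convert this using 1
  ring

end Aux

/-- Closed form of the first-level Gaussian integral: with `a = √(2ν)`,
`Q(a) = γ₁((a,∞))` and `p(a) = (2π)^{-1/2} e^{-a²/2}`,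
`∫ (g² + φ̄_ν(g)) dγ₁(g) = 1/2 − ν − a·p(a) − Q(a) + 2ν·Q(a)`. -/
theorem first_level_integral (ν : ℝ) (hν : 0 ≤ ν)
    (a : ℝ) (ha : a = Real.sqrt (2 * ν))
    (Q : ℝ) (hQ : Q = ((gaussianReal 0 1) (Set.Ioi a)).toReal)
    (p : ℝ) (hp : p = (Real.sqrt (2 * Real.pi))⁻¹ * Real.exp (-(a ^ 2) / 2)) :
    ∫ g, (g ^ 2 + phibar ν g) ∂(gaussianReal 0 1)
      = 1 / 2 - ν - a * p - Q + 2 * ν * Q := by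
  have h0a : 0 ≤ a := ha ▸ Real.sqrt_nonneg _
  set γ := gaussianReal 0 1 with hγ
  -- pointwise decomposition
  have key : ∀ g : ℝ, g ^ 2 + phibar ν g
      = -ν + Set.indicator (Set.Ioc 0 a) (fun x => x ^ 2) g
          + Set.indicator (Set.Ioi a) (fun _ => 2 * ν) g := by
    intro g
    rw [phibar, ← ha]
    by_cases hg0 : g ≤ 0
    · rw [if_pos hg0, Set.indicator_of_notMem (by simp [Set.mem_Ioc]; intro h; linarith),
        Set.indicator_of_notMem (by simp [Set.mem_Ioi]; linarith)]
      ring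
    · push_neg at hg0
      rw [if_neg (not_le.mpr hg0)]
      by_cases hga : g ≤ a
      · rw [if_pos hga, Set.indicator_of_mem (by simp [Set.mem_Ioc, hg0, hga]),
          Set.indicator_of_notMem (by simp [Set.mem_Ioi]; linarith)]
        ring
      · push_neg at hga
        rw [if_neg (not_le.mpr hga), Set.indicator_of_notMem (by simp [Set.mem_Ioc]; intro h; linarith),
          Set.indicator_of_mem (by simp [Set.mem_Ioi, hga])]
        ring
  -- integrability
  have m1 : Measurable (Set.indicator (Set.Ioc 0 a) (fun x : ℝ => x ^ 2)) :=
    (measurable_id.pow_const 2).indicator measurableSet_Ioc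
  have i1 : Integrable (Set.indicator (Set.Ioc 0 a) (fun x : ℝ => x ^ 2)) γ := by
    refine Integrable.mono' (integrable_const (a ^ 2)) m1.aestronglyMeasurable
      (Filter.Eventually.of_forall fun x => ?_)
    by_cases hx : x ∈ Set.Ioc 0 a
    · rw [Set.indicator_of_mem hx]
      simp only [Real.norm_eq_abs, abs_of_nonneg (sq_nonneg x)]
      exact pow_le_pow_left₀ (le_of_lt hx.1) hx.2 2
    · rw [Set.indicator_of_notMem hx]
      simpa using sq_nonneg a
  have i2 : Integrable (Set.indicator (Set.Ioi a) (fun _ : ℝ => 2 * ν)) γ :=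
    (integrable_const (2 * ν)).indicator measurableSet_Ioi
  -- split the integral
  have hsplit : ∫ g, (g ^ 2 + phibar ν g) ∂γ
      = -ν + (∫ g, Set.indicator (Set.Ioc 0 a) (fun x => x ^ 2) g ∂γ)
          + (∫ g, Set.indicator (Set.Ioi a) (fun _ => 2 * ν) g ∂γ) := by
    calc ∫ g, (g ^ 2 + phibar ν g) ∂γ
        = ∫ g, (-ν + (Set.indicator (Set.Ioc 0 a) (fun x => x ^ 2) g
            + Set.indicator (Set.Ioi a) (fun _ => 2 * ν) g)) ∂γ := by
          refine integral_congr_ae (Filter.Eventually.of_forall fun g => ?_)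
          dsimp only; rw [key g]; ring
      _ = (∫ _g, (-ν : ℝ) ∂γ) + ∫ g, (Set.indicator (Set.Ioc 0 a) (fun x => x ^ 2) g
            + Set.indicator (Set.Ioi a) (fun _ => 2 * ν) g) ∂γ :=
          integral_add (integrable_const _) (i1.add i2)
      _ = -ν + (∫ g, Set.indicator (Set.Ioc 0 a) (fun x => x ^ 2) g ∂γ)
            + (∫ g, Set.indicator (Set.Ioi a) (fun _ => 2 * ν) g ∂γ) := by
          rw [integral_add i1 i2, integral_const]
          simp [measure_univ]
          ring
  -- measure of Ioc 0 a
  have hQnn : ((γ) (Set.Ioi a)).toReal = Q := hQ.symm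
  have hIoc : ((γ) (Set.Ioc 0 a)).toReal = 1 / 2 - Q := by
    have hunion : Set.Ioc 0 a ∪ Set.Ioi a = Set.Ioi (0:ℝ) := Set.Ioc_union_Ioi_eq_Ioi h0a
    have hdisj : Disjoint (Set.Ioc 0 a) (Set.Ioi a) := by
      rw [Set.disjoint_left]
      rintro x ⟨_, hx2⟩ hx3
      exact absurd hx3 (not_lt.mpr hx2)
    have := measure_union (μ := γ) hdisj measurableSet_Ioi
    rw [hunion] at this
    have hfin1 : γ (Set.Ioc 0 a) ≠ ⊤ := measure_ne_top _ _
    have hfin2 : γ (Set.Ioi a) ≠ ⊤ := measure_ne_top _ _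
    have htr : ((γ) (Set.Ioi (0:ℝ))).toReal
        = ((γ) (Set.Ioc 0 a)).toReal + ((γ) (Set.Ioi a)).toReal := by
      rw [this, ENNReal.toReal_add hfin1 hfin2]
    rw [gauss_half] at htr
    linarith [htr, hQnn]
  -- second indicator integral
  have hI2 : ∫ g, Set.indicator (Set.Ioi a) (fun _ => 2 * ν) g ∂γ = 2 * ν * Q := by
    rw [integral_indicator measurableSet_Ioi, setIntegral_const, measureReal_def, hQnn, smul_eq_mul]
    ring
  -- first indicator integral via FTC
  set c := (Real.sqrt (2 * Real.pi))⁻¹ with hc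
  have hpdfc : ∀ x : ℝ, gaussianPDFReal 0 1 x = c * Real.exp (-(x^2)/2) := fun x => pdf_eq x
  have hI1 : ∫ g, Set.indicator (Set.Ioc 0 a) (fun x => x ^ 2) g ∂γ
      = -(a * p) + (1 / 2 - Q) := by
    rw [integral_indicator measurableSet_Ioc, gauss_setIntegral _ measurableSet_Ioc]
    have hftc : ∫ x in (0:ℝ)..a, (c * Real.exp (-(x^2)/2) * x ^ 2 - c * Real.exp (-(x^2)/2))
        = (-a * (c * Real.exp (-(a^2)/2))) - (-(0:ℝ) * (c * Real.exp (-((0:ℝ)^2)/2))) := by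
      have hce : Continuous fun x : ℝ => c * Real.exp (-(x^2)/2) :=
        continuous_const.mul (Real.continuous_exp.comp ((continuous_pow 2).neg.div_const 2))
      exact intervalIntegral.integral_eq_sub_of_hasDerivAt (fun x _ => hasDerivAt_G c x)
        (((hce.mul (continuous_pow 2)).sub hce).intervalIntegrable _ _)
    have hcont2 : Continuous fun x : ℝ => c * Real.exp (-(x^2)/2) :=
      continuous_const.mul (Real.continuous_exp.comp ((continuous_pow 2).neg.div_const 2))
    have hcont1 : Continuous fun x : ℝ => c * Real.exp (-(x^2)/2) * x ^ 2 :=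
      hcont2.mul (continuous_pow 2)
    have hsub : ∫ x in (0:ℝ)..a, c * Real.exp (-(x^2)/2) * x ^ 2
        = (∫ x in (0:ℝ)..a, (c * Real.exp (-(x^2)/2) * x ^ 2 - c * Real.exp (-(x^2)/2)))
          + ∫ x in (0:ℝ)..a, c * Real.exp (-(x^2)/2) := by
      rw [← intervalIntegral.integral_add
        ((hcont1.intervalIntegrable 0 a).sub (hcont2.intervalIntegrable 0 a)) (hcont2.intervalIntegrable _ _)]
      congr 1
      funext x
      ring_nf
    have hmeas : ∫ x in (0:ℝ)..a, c * Real.exp (-(x^2)/2) = 1 / 2 - Q := by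
      rw [intervalIntegral.integral_of_le h0a]
      have := gauss_meas (Set.Ioc 0 a) measurableSet_Ioc
      simp_rw [hpdfc] at this
      rw [← this, hIoc]
    calc ∫ x in Set.Ioc 0 a, gaussianPDFReal 0 1 x * x ^ 2
        = ∫ x in (0:ℝ)..a, c * Real.exp (-(x^2)/2) * x ^ 2 := by
          rw [intervalIntegral.integral_of_le h0a]
          refine setIntegral_congr_fun measurableSet_Ioc fun x _ => ?_
          rw [hpdfc]
      _ = (-a * (c * Real.exp (-(a^2)/2)) - (-(0:ℝ) * (c * Real.exp (-((0:ℝ)^2)/2))))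
            + (1 / 2 - Q) := by rw [hsub, hftc, hmeas]
      _ = -(a * p) + (1 / 2 - Q) := by rw [hp]; ring
  rw [hsplit, hI1, hI2]
  ring
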